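/- arXiv:1910.10643 — 3 statements merged into one kernel-verified Lean document; each statement's English description precedes it below -/
import Mathlib

section
/- Let G be the complete p-partite graph K_{r,...,r} with p parts each of size r (p, r ≥ 2). For any integer q with 1 ≤ q ≤ r, the maximum number of edges in an induced subgraph of G on qp vertices equals q²p(p-1)/2. -/
/-- The complete `p`-partite graph `K_{r,...,r}` with `p` parts of size `r`:
vertices are pairs `(part, index)`, and two vertices are adjacent iff they lie
in different parts. -/
def completeEqPartite (p r : ℕ) : SimpleGraph (Fin p × Fin r) where
  Adj u v := u.1 ≠ v.1
  symm := ⟨fun _ _ h => Ne.symm h⟩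
  loopless := ⟨fun _ h => h rfl⟩

instance (p r : ℕ) : DecidableRel (completeEqPartite p r).Adj :=
  fun u v => inferInstanceAs (Decidable (u.1 ≠ v.1))

/-- The number of edges of `G` with both endpoints in `A`
(counted via ordered pairs, divided by 2). -/
def edgesIn {V : Type*} [Fintype V] [DecidableEq V] (G : SimpleGraph V)
    [DecidableRel G.Adj] (A : Finset V) : ℕ :=
  (Finset.univ.filter
    (fun pr : V × V => pr.1 ∈ A ∧ pr.2 ∈ A ∧ G.Adj pr.1 pr.2)).card / 2

/-- `E_G(k)`: the maximum number of edges in an induced subgraph on `k` vertices. -/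
def maxEdges {V : Type*} [Fintype V] [DecidableEq V] (G : SimpleGraph V)
    [DecidableRel G.Adj] (k : ℕ) : ℕ :=
  (Finset.powersetCard k (Finset.univ : Finset V)).sup (edgesIn G)

open Finset

lemma card_adj (p r : ℕ) (A : Finset (Fin p × Fin r)) :
    (Finset.univ.filter
      (fun pr : (Fin p × Fin r) × (Fin p × Fin r) =>
        pr.1 ∈ A ∧ pr.2 ∈ A ∧ pr.1.1 ≠ pr.2.1)).card
    = A.card ^ 2 - ∑ i : Fin p, (A.filter (fun v => v.1 = i)).card ^ 2 := by
  have h1 : (Finset.univ.filter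
      (fun pr : (Fin p × Fin r) × (Fin p × Fin r) =>
        pr.1 ∈ A ∧ pr.2 ∈ A ∧ pr.1.1 ≠ pr.2.1))
      = (A ×ˢ A).filter (fun pr => pr.1.1 ≠ pr.2.1) := by
    ext pr; simp [and_assoc]
  have h2 : ((A ×ˢ A).filter (fun pr => pr.1.1 = pr.2.1)).card
      = ∑ i : Fin p, (A.filter (fun v => v.1 = i)).card ^ 2 := by
    rw [card_eq_sum_card_fiberwise (f := fun pr => pr.1.1)
      (t := Finset.univ) (fun x _ => mem_univ _)]
    refine Finset.sum_congr rfl fun i _ => ?_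
    rw [sq, ← Finset.card_product]
    congr 1
    ext pr
    simp only [mem_filter, mem_product]
    constructor
    · rintro ⟨⟨⟨h1, h2⟩, h3⟩, h4⟩
      exact ⟨⟨h1, h4⟩, h2, h3 ▸ h4⟩
    · rintro ⟨⟨h1, h4⟩, h2, h5⟩
      exact ⟨⟨⟨h1, h2⟩, h4.trans h5.symm⟩, h4⟩
  have h3 := Finset.card_filter_add_card_filter_not
    (s := A ×ˢ A) (p := fun pr => pr.1.1 ≠ pr.2.1)
  rw [h1]
  simp only [ne_eq, not_not] at h3 ⊢
  rw [Finset.card_product, ← sq, h2] at h3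
  omega

lemma sum_fibers (p r : ℕ) (A : Finset (Fin p × Fin r)) :
    ∑ i : Fin p, (A.filter (fun v => v.1 = i)).card = A.card := by
  rw [← Finset.card_eq_sum_card_fiberwise (f := fun v : Fin p × Fin r => v.1)
    (t := Finset.univ) (fun x _ => mem_univ _)]

lemma edgesIn_eq (p r : ℕ) (A : Finset (Fin p × Fin r)) :
    edgesIn (completeEqPartite p r) A
    = (A.card ^ 2 - ∑ i : Fin p, (A.filter (fun v => v.1 = i)).card ^ 2) / 2 := by
  unfold edgesIn
  exact congrArg (· / 2) (card_adj p r A)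

lemma numer_eq (p q : ℕ) (hp : 1 ≤ p) :
    (q * p) ^ 2 - q ^ 2 * p = q ^ 2 * p * (p - 1) := by
  obtain ⟨p', rfl⟩ : ∃ p', p = p' + 1 := ⟨p - 1, by omega⟩
  simp only [Nat.add_sub_cancel]
  have : (q * (p' + 1)) ^ 2 = q ^ 2 * (p' + 1) * p' + q ^ 2 * (p' + 1) := by ring
  omega

theorem stmt1 (p r q : ℕ) (hp : 2 ≤ p) (hr : 2 ≤ r) (hq1 : 1 ≤ q) (hq2 : q ≤ r) :
    maxEdges (completeEqPartite p r) (q * p) = q ^ 2 * p * (p - 1) / 2 := by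
  apply le_antisymm
  · apply Finset.sup_le
    intro A hA
    rw [Finset.mem_powersetCard] at hA
    rw [edgesIn_eq]
    apply Nat.div_le_div_right
    have hsum : ∑ i : Fin p, (A.filter (fun v => v.1 = i)).card = q * p := by
      rw [sum_fibers]; exact hA.2
    have hcs : q ^ 2 * p ≤ ∑ i : Fin p, (A.filter (fun v => v.1 = i)).card ^ 2 := by
      have h := sq_sum_le_card_mul_sum_sq (s := (Finset.univ : Finset (Fin p)))
        (f := fun i => (((A.filter (fun v => v.1 = i)).card : ℕ) : ℤ))
      have h1 : ((q * p : ℕ) : ℤ) ^ 2 ≤ (p : ℤ) * ∑ i : Fin p, (((A.filter (fun v => v.1 = i)).card : ℕ) : ℤ) ^ 2 := by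
        rw [← Nat.cast_sum, hsum] at h
        simpa using h
      have h2 : ((q ^ 2 * p : ℕ) : ℤ) ≤ ((∑ i : Fin p, (A.filter (fun v => v.1 = i)).card ^ 2 : ℕ) : ℤ) := by
        push_cast at h1 ⊢
        nlinarith [h1, (by positivity : (0:ℤ) < (p:ℤ))]
      exact_mod_cast h2
    have hnum := numer_eq p q (by omega)
    rw [hA.2]
    omega
  · have hqr : q ≤ r := hq2
    set A₀ : Finset (Fin p × Fin r) :=
      Finset.univ.filter (fun v => v.2.val < q) with hA₀
    have hfib : ∀ i : Fin p,
        A₀.filter (fun v => v.1 = i)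
          = Finset.univ.map ⟨fun x : Fin q => (i, Fin.castLE hqr x),
              fun x y h => Fin.ext (by simpa using congrArg (fun v : Fin p × Fin r => (v.2 : ℕ)) h)⟩ := by
      intro i
      ext ⟨j1, j2⟩
      simp only [hA₀, Finset.mem_filter, Finset.mem_univ, true_and, Finset.mem_map,
        Function.Embedding.coeFn_mk, Prod.mk.injEq]
      constructor
      · rintro ⟨hj2, rfl⟩
        exact ⟨⟨j2.val, hj2⟩, by simp [Fin.castLE]⟩
      · rintro ⟨x, rfl, rfl⟩
        exact ⟨x.isLt.trans_le le_rfl, rfl⟩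
    have hfibcard : ∀ i : Fin p, (A₀.filter (fun v => v.1 = i)).card = q := by
      intro i; rw [hfib i, Finset.card_map, Finset.card_univ, Fintype.card_fin]
    have hcard : A₀.card = q * p := by
      have := sum_fibers p r A₀
      simp only [hfibcard] at this
      simp only [Finset.sum_const, Finset.card_univ, Fintype.card_fin, smul_eq_mul] at this
      rw [← this, Nat.mul_comm]
    have hmem : A₀ ∈ Finset.powersetCard (q * p) (Finset.univ : Finset (Fin p × Fin r)) := by
      rw [Finset.mem_powersetCard]
      exact ⟨Finset.subset_univ _, hcard⟩
    have hval : edgesIn (completeEqPartite p r) A₀ = q ^ 2 * p * (p - 1) / 2 := by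
      rw [edgesIn_eq, hcard]
      simp only [hfibcard]
      rw [Finset.sum_const, Finset.card_univ, Fintype.card_fin, smul_eq_mul]
      rw [show p * q ^ 2 = q ^ 2 * p from Nat.mul_comm _ _, numer_eq p q (by omega)]
    calc q ^ 2 * p * (p - 1) / 2 = edgesIn (completeEqPartite p r) A₀ := hval.symm
      _ ≤ _ := Finset.le_sup hmem
end

section
/- Let G be the complete p-partite graph K_{r,...,r} with p, r ≥ 2. A subset H of V(G) of size qp (1 ≤ q ≤ r) achieves the maximum number of induced edges among all subsets of its size if H consists of exactly q vertices from each of the p parts. -/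
open Finset in
lemma diag_card (p r : ℕ) (B : Finset (Fin p × Fin r)) :
    ((B ×ˢ B).filter (fun pr => pr.1.1 = pr.2.1)).card
      = ∑ t : Fin p, (B.filter (fun v => v.1 = t)).card ^ 2 := by
  rw [Finset.card_eq_sum_card_fiberwise
    (f := fun pr : (Fin p × Fin r) × (Fin p × Fin r) => pr.1.1) (t := Finset.univ)
    (fun x _ => mem_univ _)]
  refine Finset.sum_congr rfl fun t _ => ?_
  rw [Finset.filter_filter]
  have : ((B ×ˢ B).filter fun pr => pr.1.1 = pr.2.1 ∧ pr.1.1 = t)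
      = (B.filter (fun v => v.1 = t)) ×ˢ (B.filter (fun v => v.1 = t)) := by
    ext pr
    simp only [mem_filter, mem_product]
    constructor
    · rintro ⟨⟨h1, h2⟩, he, ht⟩
      exact ⟨⟨h1, ht⟩, h2, he ▸ ht⟩
    · rintro ⟨⟨h1, ht1⟩, h2, ht2⟩
      exact ⟨⟨h1, h2⟩, ht1.trans ht2.symm, ht1⟩
  rw [this, Finset.card_product, sq]

open Finset in
lemma edges_count (p r : ℕ) (B : Finset (Fin p × Fin r)) :
    (Finset.univ.filter
      (fun pr : (Fin p × Fin r) × (Fin p × Fin r) =>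
        pr.1 ∈ B ∧ pr.2 ∈ B ∧ (completeEqPartite p r).Adj pr.1 pr.2)).card
      = B.card ^ 2 - ∑ t : Fin p, (B.filter (fun v => v.1 = t)).card ^ 2 := by
  have h1 : (Finset.univ.filter
      (fun pr : (Fin p × Fin r) × (Fin p × Fin r) =>
        pr.1 ∈ B ∧ pr.2 ∈ B ∧ (completeEqPartite p r).Adj pr.1 pr.2))
      = (B ×ˢ B).filter (fun pr => ¬ pr.1.1 = pr.2.1) := by
    ext pr
    simp only [Finset.mem_filter, Finset.mem_univ, Finset.mem_product, true_and]
    simp [completeEqPartite, and_assoc]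
  have h2 := Finset.card_filter_add_card_filter_not
    (s := B ×ˢ B) (p := fun pr => pr.1.1 = pr.2.1)
  have h3 := diag_card p r B
  have h4 : (B ×ˢ B).card = B.card ^ 2 := by rw [card_product, sq]
  rw [h1]
  omega

open Finset in
theorem stmt3 (p r q : ℕ) (hp : 2 ≤ p) (hr : 2 ≤ r) (hq1 : 1 ≤ q) (hq2 : q ≤ r)
    (A : Finset (Fin p × Fin r))
    (hA : ∀ t : Fin p, (A.filter (fun v => v.1 = t)).card = q) :
    ∀ B : Finset (Fin p × Fin r), B.card = A.card →
      edgesIn (completeEqPartite p r) B ≤ edgesIn (completeEqPartite p r) A := by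
  intro B hB
  have cardA : A.card = p * q := by
    rw [Finset.card_eq_sum_card_fiberwise (f := fun v : Fin p × Fin r => v.1)
      (t := Finset.univ) (fun x _ => mem_univ _)]
    simp [hA, Finset.sum_const, Finset.card_univ]
  have cardB : ∑ t : Fin p, (B.filter (fun v => v.1 = t)).card = p * q := by
    rw [← Finset.card_eq_sum_card_fiberwise (f := fun v : Fin p × Fin r => v.1)
      (t := Finset.univ) (fun x _ => mem_univ _), hB, cardA]
  have hcs : (∑ t : Fin p, (B.filter (fun v => v.1 = t)).card) ^ 2
      ≤ p * ∑ t : Fin p, (B.filter (fun v => v.1 = t)).card ^ 2 := by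
    have := sq_sum_le_card_mul_sum_sq
      (s := (Finset.univ : Finset (Fin p)))
      (f := fun t => ((B.filter (fun v => v.1 = t)).card : ℤ))
    have h2 : ((∑ t : Fin p, (B.filter (fun v => v.1 = t)).card : ℕ) : ℤ) ^ 2
        ≤ (p : ℤ) * ((∑ t : Fin p, (B.filter (fun v => v.1 = t)).card ^ 2 : ℕ) : ℤ) := by
      push_cast
      simpa using this
    exact_mod_cast h2
  have hsum : p * q ^ 2 ≤ ∑ t : Fin p, (B.filter (fun v => v.1 = t)).card ^ 2 := by
    have hp0 : 0 < p := by omega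
    refine Nat.le_of_mul_le_mul_left ?_ hp0
    calc p * (p * q ^ 2) = (p * q) ^ 2 := by ring
      _ = (∑ t : Fin p, (B.filter (fun v => v.1 = t)).card) ^ 2 := by rw [cardB]
      _ ≤ p * ∑ t : Fin p, (B.filter (fun v => v.1 = t)).card ^ 2 := hcs
  have hsumA : ∑ t : Fin p, (A.filter (fun v => v.1 = t)).card ^ 2 = p * q ^ 2 := by
    simp [hA, Finset.sum_const, Finset.card_univ]
  unfold edgesIn
  apply Nat.div_le_div_right
  rw [edges_count, edges_count, hB, hsumA]
  exact Nat.sub_le_sub_left hsum _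
end

section
/- Let G = K_{2^{n−p},…,2^{n−p}} be the complete 2^p-partite graph on 2^n vertices with parts of size 2^{n−p} (p, n ≥ 2), and let A be a subset of V(G) of size 2^j − 1 that maximizes the number of induced edges among subsets of its size. Then the number of edges of G with exactly one endpoint in A equals (2^j−1)(2^{n−p}(2^p−1)−(2^j−2)) if j ≤ p, and (2^p−1)(2^{n−p}(2^j−1)−2^{j−p}(2^j−2)) if j > p. -/
/-- The edge boundary of `A`: edges with exactly one endpoint in `A`, counted as
ordered adjacent pairs `(u, v)` with `u ∈ A`, `v ∉ A`. -/
def edgeBoundary {V : Type*} [Fintype V] [DecidableEq V] (G : SimpleGraph V)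
    [DecidableRel G.Adj] (A : Finset V) : ℕ :=
  (Finset.univ.filter
    (fun pr : V × V => G.Adj pr.1 pr.2 ∧ pr.1 ∈ A ∧ pr.2 ∉ A)).card


open Finset

lemma finCard (N m : ℕ) (h : m ≤ N) :
    ((Finset.univ : Finset (Fin N)).filter (fun x => x.val < m)).card = m := by
  have : (Finset.univ.filter fun x : Fin N => x.val < m)
      = (Finset.range m).attachFin (fun x hx => lt_of_lt_of_le (Finset.mem_range.mp hx) h) := by
    ext a; simp [Finset.mem_attachFin]
  rw [this, Finset.card_attachFin, Finset.card_range]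

variable {t r : ℕ}

def PP (t r : ℕ) (A : Finset (Fin t × Fin r)) : ℕ :=
  (Finset.univ.filter
    (fun pr : (Fin t × Fin r) × (Fin t × Fin r) =>
      pr.1 ∈ A ∧ pr.2 ∈ A ∧ pr.1.1 ≠ pr.2.1)).card

lemma edgesIn_eq_s9 (A : Finset (Fin t × Fin r)) :
    edgesIn (completeEqPartite t r) A = PP t r A / 2 := rfl

lemma sum_fib (A : Finset (Fin t × Fin r)) :
    ∑ i : Fin t, (A.filter fun v => v.1 = i).card = A.card :=
  (Finset.card_eq_sum_card_fiberwise (fun x _ => Finset.mem_univ x.1)).symm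

lemma PP_add_sum_sq (A : Finset (Fin t × Fin r)) :
    PP t r A + ∑ i : Fin t, ((A.filter fun v => v.1 = i).card)^2 = A.card^2 := by
  have h1 : PP t r A = ((A ×ˢ A).filter fun pr => pr.1.1 ≠ pr.2.1).card := by
    unfold PP; congr 1; ext pr; simp [Finset.mem_product, and_assoc]
  have h2 : ((A ×ˢ A).filter fun pr => pr.1.1 = pr.2.1).card
      = ∑ i : Fin t, ((A.filter fun v => v.1 = i).card)^2 := by
    rw [Finset.card_eq_sum_card_fiberwise
      (f := fun pr => pr.1.1) (t := Finset.univ) (fun x _ => Finset.mem_univ _)]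
    refine Finset.sum_congr rfl fun i _ => ?_
    have : (((A ×ˢ A).filter fun pr => pr.1.1 = pr.2.1).filter fun pr => pr.1.1 = i)
        = (A.filter fun v => v.1 = i) ×ˢ (A.filter fun v => v.1 = i) := by
      ext pr
      simp only [Finset.mem_filter, Finset.mem_product]
      constructor
      · rintro ⟨⟨⟨h1, h2⟩, h3⟩, h4⟩; exact ⟨⟨h1, h4⟩, h2, h3 ▸ h4⟩
      · rintro ⟨⟨h1, h2⟩, h3, h4⟩; exact ⟨⟨⟨h1, h3⟩, h2.trans h4.symm⟩, h2⟩
    rw [this, Finset.card_product, sq]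
  have h3 := Finset.card_filter_add_card_filter_not
    (s := A ×ˢ A) (p := fun pr => pr.1.1 = pr.2.1)
  rw [Finset.card_product, ← sq] at h3
  simp only [ne_eq] at h1 h2 h3
  omega

lemma boundary_add_PP (A : Finset (Fin t × Fin r)) :
    edgeBoundary (completeEqPartite t r) A + PP t r A = A.card * (t * r - r) := by
  classical
  set S : Finset ((Fin t × Fin r) × (Fin t × Fin r)) :=
    Finset.univ.filter (fun pr => pr.1 ∈ A ∧ pr.1.1 ≠ pr.2.1) with hS
  have hsplit : PP t r A + edgeBoundary (completeEqPartite t r) A = S.card := by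
    have h := Finset.card_filter_add_card_filter_not
      (s := S) (p := fun pr => pr.2 ∈ A)
    have e1 : S.filter (fun pr => pr.2 ∈ A)
        = Finset.univ.filter (fun pr : (Fin t × Fin r) × (Fin t × Fin r) =>
            pr.1 ∈ A ∧ pr.2 ∈ A ∧ pr.1.1 ≠ pr.2.1) := by
      ext pr; simp [hS]; tauto
    have e2 : S.filter (fun pr => ¬ pr.2 ∈ A)
        = Finset.univ.filter (fun pr : (Fin t × Fin r) × (Fin t × Fin r) =>
            (completeEqPartite t r).Adj pr.1 pr.2 ∧ pr.1 ∈ A ∧ pr.2 ∉ A) := by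
      ext pr; simp only [hS, Finset.mem_filter, Finset.mem_univ, true_and]
      exact ⟨fun ⟨⟨a, b⟩, c⟩ => ⟨b, a, c⟩, fun ⟨b, a, c⟩ => ⟨⟨a, b⟩, c⟩⟩
    rw [e1, e2] at h
    rw [← h]; rfl
  have hfib : ∀ u ∈ A, (S.filter (fun pr => pr.1 = u)).card = t * r - r := by
    intro u _
    have efib : S.filter (fun pr => pr.1 = u)
        = {u} ×ˢ (Finset.univ.filter fun v : Fin t × Fin r => u.1 ≠ v.1) := by
      ext pr
      simp only [hS, Finset.mem_filter, Finset.mem_product, Finset.mem_singleton,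
        Finset.mem_univ, true_and]
      constructor
      · rintro ⟨⟨_, hne⟩, h⟩; exact ⟨h, h ▸ hne⟩
      · rintro ⟨h1, h2⟩; exact ⟨⟨h1 ▸ ‹u ∈ A›, h1 ▸ h2⟩, h1⟩
    rw [efib, Finset.card_product, Finset.card_singleton, one_mul]
    have h := Finset.card_filter_add_card_filter_not
      (s := (Finset.univ : Finset (Fin t × Fin r))) (p := fun v => u.1 = v.1)
    have e3 : (Finset.univ : Finset (Fin t × Fin r)).filter (fun v => u.1 = v.1)
        = {u.1} ×ˢ (Finset.univ : Finset (Fin r)) := by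
      ext v
      simp only [Finset.mem_filter, Finset.mem_product, Finset.mem_singleton,
        Finset.mem_univ, true_and, and_true]
      exact ⟨fun h' => h'.symm, fun h' => h'.symm⟩
    rw [e3, Finset.card_product, Finset.card_singleton, one_mul] at h
    simp only [Finset.card_univ, Fintype.card_prod, Fintype.card_fin] at h
    have e4 : (Finset.univ : Finset (Fin t × Fin r)).filter (fun v => ¬ u.1 = v.1)
        = (Finset.univ : Finset (Fin t × Fin r)).filter (fun v => u.1 ≠ v.1) := rfl
    rw [e4] at h
    omega
  have hcount : S.card = A.card * (t * r - r) := by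
    rw [Finset.card_eq_sum_card_fiberwise
      (f := fun pr => pr.1) (t := A) (fun x hx => (Finset.mem_filter.mp hx).2.1)]
    rw [Finset.sum_congr rfl hfib, Finset.sum_const, smul_eq_mul]
  omega

lemma even_PP (A : Finset (Fin t × Fin r)) : PP t r A % 2 = 0 := by
  have h1 := PP_add_sum_sq A
  have h2 := sum_fib (t := t) (r := r) A
  have hsq : ∀ a : ℕ, a ^ 2 % 2 = a % 2 := by
    intro a
    rw [pow_two, Nat.mul_mod]
    rcases Nat.mod_two_eq_zero_or_one a with h | h <;> simp [h]
  have h3 : (∑ i : Fin t, ((A.filter fun v => v.1 = i).card)^2) % 2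
      = (∑ i : Fin t, (A.filter fun v => v.1 = i).card) % 2 := by
    rw [Finset.sum_nat_mod, Finset.sum_congr rfl (fun i _ => hsq _), ← Finset.sum_nat_mod]
  have h4 := hsq A.card
  omega

def Bset (t r : ℕ) (c : Fin t → ℕ) : Finset (Fin t × Fin r) :=
  Finset.univ.filter fun v => v.2.val < c v.1

lemma Bset_fiber (c : Fin t → ℕ) (hc : ∀ i, c i ≤ r) (i : Fin t) :
    ((Bset t r c).filter fun v => v.1 = i).card = c i := by
  have e : (Bset t r c).filter (fun v => v.1 = i)
      = {i} ×ˢ (Finset.univ.filter fun x : Fin r => x.val < c i) := by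
    ext v
    simp only [Bset, Finset.mem_filter, Finset.mem_product, Finset.mem_singleton,
      Finset.mem_univ, true_and]
    constructor
    · rintro ⟨h1, h2⟩; exact ⟨h2, h2 ▸ h1⟩
    · rintro ⟨h1, h2⟩; exact ⟨h1 ▸ h2, h1⟩
  rw [e, Finset.card_product, Finset.card_singleton, one_mul, finCard _ _ (hc i)]

lemma Bset_card (c : Fin t → ℕ) (hc : ∀ i, c i ≤ r) :
    (Bset t r c).card = ∑ i : Fin t, c i := by
  rw [← sum_fib (Bset t r c)]
  exact Finset.sum_congr rfl fun i _ => Bset_fiber c hc i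

lemma sum_if_const (N m x y : ℕ) (hm : m ≤ N) :
    ∑ i : Fin N, (if i.val < m then x else y) = m * x + (N - m) * y := by
  rw [Finset.sum_ite, Finset.sum_const, Finset.sum_const, smul_eq_mul, smul_eq_mul]
  have h := Finset.card_filter_add_card_filter_not
    (s := (Finset.univ : Finset (Fin N))) (p := fun i => i.val < m)
  rw [finCard N m hm] at h
  have hcu : (Finset.univ : Finset (Fin N)).card = N := by simp
  rw [hcu] at h
  have h2 : (Finset.univ.filter (fun i : Fin N => ¬ i.val < m)).card = N - m := by omega
  rw [h2, finCard N m hm]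

theorem stmt9 (n p j : ℕ) (hp : 2 ≤ p) (hn : 2 ≤ n) (hpn : p ≤ n)
    (hj1 : 1 ≤ j) (hj2 : j ≤ n)
    (A : Finset (Fin (2 ^ p) × Fin (2 ^ (n - p))))
    (hcard : A.card = 2 ^ j - 1)
    (hopt : ∀ B : Finset (Fin (2 ^ p) × Fin (2 ^ (n - p))), B.card = A.card →
      edgesIn (completeEqPartite (2 ^ p) (2 ^ (n - p))) B ≤
        edgesIn (completeEqPartite (2 ^ p) (2 ^ (n - p))) A) :
    edgeBoundary (completeEqPartite (2 ^ p) (2 ^ (n - p))) A =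
      if j ≤ p then (2 ^ j - 1) * (2 ^ (n - p) * (2 ^ p - 1) - (2 ^ j - 2))
      else (2 ^ p - 1) * (2 ^ (n - p) * (2 ^ j - 1) - 2 ^ (j - p) * (2 ^ j - 2)) := by
  have hr1 : 1 ≤ 2 ^ (n - p) := Nat.one_le_two_pow
  have ht1 : 1 ≤ 2 ^ p := Nat.one_le_two_pow
  have hk2 : 2 ≤ 2 ^ j := by
    calc 2 = 2 ^ 1 := rfl
    _ ≤ 2 ^ j := Nat.pow_le_pow_right (by norm_num) hj1
  have hbd := boundary_add_PP (t := 2 ^ p) (r := 2 ^ (n - p)) A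
  rw [hcard] at hbd
  have hPA := PP_add_sum_sq (t := 2 ^ p) (r := 2 ^ (n - p)) A
  rw [hcard] at hPA
  by_cases hjp : j ≤ p
  · -- case j ≤ p
    rw [if_pos hjp]
    have hkt : 2 ^ j - 1 ≤ 2 ^ p := by
      have := Nat.pow_le_pow_right (show 1 ≤ 2 by norm_num) hjp
      omega
    set c : Fin (2 ^ p) → ℕ := fun i => if i.val < 2 ^ j - 1 then 1 else 0 with hc_def
    have hc : ∀ i, c i ≤ 2 ^ (n - p) := by
      intro i; simp only [hc_def]; split
      · exact hr1
      · exact Nat.zero_le _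
    set B := Bset (2 ^ p) (2 ^ (n - p)) c with hB_def
    have hsum : ∑ i : Fin (2 ^ p), c i = 2 ^ j - 1 := by
      simp only [hc_def]
      rw [sum_if_const _ _ _ _ hkt]; ring
    have hcardB : B.card = 2 ^ j - 1 := by
      rw [hB_def, Bset_card c hc, hsum]
    have hB2 := PP_add_sum_sq (t := 2 ^ p) (r := 2 ^ (n - p)) B
    have hfibsq : ∑ i : Fin (2 ^ p), ((B.filter fun v => v.1 = i).card) ^ 2
        = 2 ^ j - 1 := by
      have e : ∀ i : Fin (2 ^ p), ((B.filter fun v => v.1 = i).card) ^ 2 = c i := by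
        intro i
        rw [hB_def, Bset_fiber c hc i]
        simp only [hc_def]; split <;> norm_num
      rw [Finset.sum_congr rfl (fun i _ => e i), hsum]
    rw [hcardB, hfibsq] at hB2
    have hBA : PP (2 ^ p) (2 ^ (n - p)) B ≤ PP (2 ^ p) (2 ^ (n - p)) A := by
      have h := hopt B (by rw [hcardB, hcard])
      rw [edgesIn_eq_s9, edgesIn_eq_s9] at h
      have e1 := even_PP (t := 2 ^ p) (r := 2 ^ (n - p)) A
      have e2 := even_PP (t := 2 ^ p) (r := 2 ^ (n - p)) B
      omega
    have hSA : 2 ^ j - 1 ≤ ∑ i : Fin (2 ^ p), ((A.filter fun v => v.1 = i).card) ^ 2 := by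
      have h1 : ∑ i : Fin (2 ^ p), (A.filter fun v => v.1 = i).card
          ≤ ∑ i : Fin (2 ^ p), ((A.filter fun v => v.1 = i).card) ^ 2 :=
        Finset.sum_le_sum fun i _ => Nat.le_self_pow (by norm_num) _
      rw [sum_fib A, hcard] at h1
      exact h1
    have hPPA : PP (2 ^ p) (2 ^ (n - p)) A + (2 ^ j - 1) = (2 ^ j - 1) ^ 2 := by omega
    have hle : 2 ^ j - 2 ≤ 2 ^ (n - p) * (2 ^ p - 1) := by
      have h1 : 2 ^ j ≤ 2 ^ p := Nat.pow_le_pow_right (by norm_num) hjp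
      have h2 : 2 ^ p - 1 ≤ 2 ^ (n - p) * (2 ^ p - 1) :=
        Nat.le_mul_of_pos_left _ (by omega)
      omega
    have key : (2 ^ j - 1) * (2 ^ (n - p) * (2 ^ p - 1) - (2 ^ j - 2)) + (2 ^ j - 1) ^ 2
        = (2 ^ j - 1) * (2 ^ p * 2 ^ (n - p) - 2 ^ (n - p)) + (2 ^ j - 1) := by
      zify [hle, ht1, hr1, hk2, show (1:ℕ) ≤ 2 ^ j by omega,
        show 2 ^ (n - p) ≤ 2 ^ p * 2 ^ (n - p) from Nat.le_mul_of_pos_left _ (by omega)]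
      ring
    omega
  · -- case p < j
    rw [if_neg hjp]
    have hq2 : 2 ≤ 2 ^ (j - p) := by
      calc 2 = 2 ^ 1 := rfl
      _ ≤ 2 ^ (j - p) := Nat.pow_le_pow_right (by norm_num) (by omega)
    have hqr : 2 ^ (j - p) ≤ 2 ^ (n - p) := Nat.pow_le_pow_right (by norm_num) (by omega)
    have htq : 2 ^ p * 2 ^ (j - p) = 2 ^ j := by
      rw [← pow_add]; congr 1; omega
    set c : Fin (2 ^ p) → ℕ :=
      fun i => if i.val < 2 ^ p - 1 then 2 ^ (j - p) else 2 ^ (j - p) - 1 with hc_def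
    have hc : ∀ i, c i ≤ 2 ^ (n - p) := by
      intro i; simp only [hc_def]; split
      · exact hqr
      · omega
    set B := Bset (2 ^ p) (2 ^ (n - p)) c with hB_def
    have hsum : ∑ i : Fin (2 ^ p), c i = 2 ^ j - 1 := by
      simp only [hc_def]
      rw [sum_if_const _ _ _ _ (by omega)]
      have h1 : 2 ^ p - (2 ^ p - 1) = 1 := by omega
      rw [h1, one_mul]
      have h2 : (2 ^ p - 1) * 2 ^ (j - p) = 2 ^ p * 2 ^ (j - p) - 2 ^ (j - p) := by
        rw [Nat.sub_mul, one_mul]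
      rw [h2, htq]
      have h3 : 2 ^ (j - p) ≤ 2 ^ j := Nat.pow_le_pow_right (by norm_num) (by omega)
      omega
    have hcardB : B.card = 2 ^ j - 1 := by
      rw [hB_def, Bset_card c hc, hsum]
    have hfibsq : ∑ i : Fin (2 ^ p), ((B.filter fun v => v.1 = i).card) ^ 2
        = (2 ^ p - 1) * (2 ^ (j - p)) ^ 2 + (2 ^ (j - p) - 1) ^ 2 := by
      have e : ∀ i : Fin (2 ^ p), ((B.filter fun v => v.1 = i).card) ^ 2
          = if i.val < 2 ^ p - 1 then (2 ^ (j - p)) ^ 2 else (2 ^ (j - p) - 1) ^ 2 := by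
        intro i
        rw [hB_def, Bset_fiber c hc i]
        simp only [hc_def]; split <;> rfl
      rw [Finset.sum_congr rfl (fun i _ => e i), sum_if_const _ _ _ _ (by omega)]
      have h1 : 2 ^ p - (2 ^ p - 1) = 1 := by omega
      rw [h1, one_mul]
    have hB2 := PP_add_sum_sq (t := 2 ^ p) (r := 2 ^ (n - p)) B
    rw [hcardB, hfibsq] at hB2
    have hBA : PP (2 ^ p) (2 ^ (n - p)) B ≤ PP (2 ^ p) (2 ^ (n - p)) A := by
      have h := hopt B (by rw [hcardB, hcard])
      rw [edgesIn_eq_s9, edgesIn_eq_s9] at h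
      have e1 := even_PP (t := 2 ^ p) (r := 2 ^ (n - p)) A
      have e2 := even_PP (t := 2 ^ p) (r := 2 ^ (n - p)) B
      omega
    have htqz : (2:ℤ) ^ p * 2 ^ (j - p) = 2 ^ j := by exact_mod_cast htq
    -- Cauchy-Schwarz lower bound for the sum of squares of A's fibers
    have hSA : (2 ^ p - 1) * (2 ^ (j - p)) ^ 2 + (2 ^ (j - p) - 1) ^ 2
        ≤ ∑ i : Fin (2 ^ p), ((A.filter fun v => v.1 = i).card) ^ 2 := by
      have hCS := sq_sum_le_card_mul_sum_sq
        (s := (Finset.univ : Finset (Fin (2 ^ p))))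
        (f := fun i => ((A.filter fun v => v.1 = i).card : ℕ))
      simp only [Nat.cast_id, Finset.card_univ, Fintype.card_fin] at hCS
      rw [sum_fib A, hcard] at hCS
      have e5 : 2 ^ p * ((2 ^ p - 1) * (2 ^ (j - p)) ^ 2 + (2 ^ (j - p) - 1) ^ 2) + 1
          = (2 ^ j - 1) ^ 2 + 2 ^ p := by
        zify [ht1, show (1:ℕ) ≤ 2 ^ (j - p) by omega, show (1:ℕ) ≤ 2 ^ j by omega]
        rw [← htqz]; ring
      by_contra hlt
      push_neg at hlt
      have hmul : 2 ^ p * (∑ i : Fin (2 ^ p), ((A.filter fun v => v.1 = i).card) ^ 2)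
            + 2 ^ p
          ≤ 2 ^ p * ((2 ^ p - 1) * (2 ^ (j - p)) ^ 2 + (2 ^ (j - p) - 1) ^ 2) := by
        have := Nat.mul_le_mul_left (2 ^ p) (show (∑ i : Fin (2 ^ p),
          ((A.filter fun v => v.1 = i).card) ^ 2) + 1
            ≤ (2 ^ p - 1) * (2 ^ (j - p)) ^ 2 + (2 ^ (j - p) - 1) ^ 2 from by omega)
        rwa [Nat.mul_add, Nat.mul_one] at this
      omega
    have hPPA : PP (2 ^ p) (2 ^ (n - p)) A
        + ((2 ^ p - 1) * (2 ^ (j - p)) ^ 2 + (2 ^ (j - p) - 1) ^ 2)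
        = (2 ^ j - 1) ^ 2 := by omega
    have hle : 2 ^ (j - p) * (2 ^ j - 2) ≤ 2 ^ (n - p) * (2 ^ j - 1) :=
      Nat.mul_le_mul hqr (by omega)
    have key : (2 ^ p - 1) * (2 ^ (n - p) * (2 ^ j - 1) - 2 ^ (j - p) * (2 ^ j - 2))
          + (2 ^ j - 1) ^ 2
        = (2 ^ j - 1) * (2 ^ p * 2 ^ (n - p) - 2 ^ (n - p))
          + ((2 ^ p - 1) * (2 ^ (j - p)) ^ 2 + (2 ^ (j - p) - 1) ^ 2) := by
      zify [hle, ht1, hr1, hk2, show (1:ℕ) ≤ 2 ^ j by omega,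
        show (1:ℕ) ≤ 2 ^ (j - p) by omega,
        show 2 ^ (n - p) ≤ 2 ^ p * 2 ^ (n - p) from Nat.le_mul_of_pos_left _ (by omega)]
      rw [← htqz]; ring
    omega
end
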